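/- Maximal leakage satisfies the data processing inequality: if Y − X − Z is a Markov chain of finite random variables, then L(Y → Z) ≤ L(X → Z). -/
import Mathlib


open scoped BigOperators
noncomputable section

/-- A joint pmf on a triple of finite alphabets. -/
def IsJointPMF3 {Y X Z : Type} [Fintype Y] [Fintype X] [Fintype Z] (r : Y → X → Z → ℝ) : Prop :=
  (∀ y x z, 0 ≤ r y x z) ∧ ∑ y, ∑ x, ∑ z, r y x z = 1

/-- Markov chain Y − X − Z: Y and Z are conditionally independent given X
(joint indexed as r y x z). -/
def MarkovYXZ {Y X Z : Type} [Fintype Y] [Fintype Z] (r : Y → X → Z → ℝ) : Prop :=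
  ∀ y x z, r y x z * (∑ y', ∑ z', r y' x z') = (∑ z', r y x z') * (∑ y', r y' x z)

/-- Closed form of maximal leakage: L(A → B) = log₂(∑_b max_{a : P_A(a)>0} P_{B|A}(b|a)).
(For a outside the support of P_A the conditional is 0/0 = 0, so the max over all a
equals the max over the support.) -/
def maxLeak {A B : Type} [Fintype A] [Fintype B] [Nonempty A] (p : A → B → ℝ) : ℝ :=
  Real.logb 2 (∑ b, Finset.univ.sup' Finset.univ_nonempty fun a => p a b / ∑ b', p a b')

/-- data processing inequality for maximal leakage:
if Y − X − Z is a Markov chain then L(Y → Z) ≤ L(X → Z). -/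
theorem maximal_leakage_dpi
    {Y X Z : Type} [Fintype Y] [Fintype X] [Fintype Z] [Nonempty Y] [Nonempty X] [Nonempty Z]
    (r : Y → X → Z → ℝ) (hr : IsJointPMF3 r) (hmc : MarkovYXZ r) :
    maxLeak (fun y z => ∑ x, r y x z) ≤ maxLeak (fun x z => ∑ y, r y x z) := by
  obtain ⟨hnn, hsum⟩ := hr
  set M : Z → ℝ := fun z =>
    Finset.univ.sup' Finset.univ_nonempty fun x =>
      (∑ y, r y x z) / ∑ z', ∑ y, r y x z' with hM
  have hMnn : ∀ z, 0 ≤ M z := by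
    intro z
    obtain ⟨x⟩ := (inferInstance : Nonempty X)
    refine le_trans ?_ (Finset.le_sup' _ (Finset.mem_univ x))
    have h1 : (0:ℝ) ≤ ∑ y, r y x z := Finset.sum_nonneg fun y _ => hnn y x z
    have h2 : (0:ℝ) ≤ ∑ z', ∑ y, r y x z' :=
      Finset.sum_nonneg fun z' _ => Finset.sum_nonneg fun y _ => hnn y x z'
    exact div_nonneg h1 h2
  have key : ∀ y z, (∑ x, r y x z) / (∑ z', ∑ x, r y x z') ≤ M z := by
    intro y z
    rcases eq_or_lt_of_le (show (0:ℝ) ≤ ∑ z', ∑ x, r y x z' from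
        Finset.sum_nonneg fun z' _ => Finset.sum_nonneg fun x _ => hnn y x z') with h | h
    · have h1 : ∑ x, r y x z ≤ ∑ z', ∑ x, r y x z' :=
        Finset.single_le_sum (fun z' _ => Finset.sum_nonneg fun x _ => hnn y x z')
          (Finset.mem_univ z)
      have h2 : (0:ℝ) ≤ ∑ x, r y x z := Finset.sum_nonneg fun x _ => hnn y x z
      have hzero : (∑ x, r y x z) = 0 := le_antisymm (by linarith) h2
      rw [hzero, zero_div]; exact hMnn z
    · rw [div_le_iff₀ h]
      have hterm : ∀ x, r y x z ≤ M z * (∑ z', r y x z') := by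
        intro x
        have hmcx := hmc y x z
        have hqY : (0:ℝ) ≤ ∑ z', r y x z' := Finset.sum_nonneg fun z' _ => hnn y x z'
        rcases eq_or_lt_of_le (show (0:ℝ) ≤ ∑ y', ∑ z', r y' x z' from
            Finset.sum_nonneg fun y' _ => Finset.sum_nonneg fun z' _ => hnn y' x z') with hx | hx
        · have h1 : r y x z ≤ ∑ z', r y x z' :=
            Finset.single_le_sum (fun z' _ => hnn y x z') (Finset.mem_univ z)
          have h2 : ∑ z', r y x z' ≤ ∑ y', ∑ z', r y' x z' :=
            Finset.single_le_sum
              (fun y' _ => Finset.sum_nonneg fun z' _ => hnn y' x z') (Finset.mem_univ y)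
          have h3 : r y x z = 0 := le_antisymm (by linarith) (hnn y x z)
          rw [h3]
          exact mul_nonneg (hMnn z) hqY
        · have hsup : (∑ y', r y' x z) / (∑ z', ∑ y', r y' x z') ≤ M z :=
            Finset.le_sup' (fun x => (∑ y', r y' x z) / ∑ z', ∑ y', r y' x z')
              (Finset.mem_univ x)
          have hS : (∑ z', ∑ y', r y' x z') = ∑ y', ∑ z', r y' x z' :=
            Finset.sum_comm
          have heq : r y x z
              = (∑ z', r y x z') * ((∑ y', r y' x z) / (∑ y', ∑ z', r y' x z')) := by
            field_simp
            linarith [hmcx]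
          rw [heq]
          calc (∑ z', r y x z') * ((∑ y', r y' x z) / (∑ y', ∑ z', r y' x z'))
              ≤ (∑ z', r y x z') * M z := by
                apply mul_le_mul_of_nonneg_left _ hqY
                rw [← hS]; exact hsup
            _ = M z * (∑ z', r y x z') := mul_comm _ _
      calc ∑ x, r y x z ≤ ∑ x, M z * (∑ z', r y x z') :=
            Finset.sum_le_sum fun x _ => hterm x
        _ = M z * ∑ x, ∑ z', r y x z' := by rw [Finset.mul_sum]
        _ = M z * ∑ z', ∑ x, r y x z' := by rw [Finset.sum_comm]
  -- positivity of LHS argument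
  have hex : ∃ y x z, 0 < r y x z := by
    by_contra hc
    push_neg at hc
    have : ∑ y, ∑ x, ∑ z, r y x z ≤ 0 :=
      Finset.sum_nonpos fun y _ => Finset.sum_nonpos fun x _ =>
        Finset.sum_nonpos fun z _ => hc y x z
    linarith
  obtain ⟨y0, x0, z0, h0⟩ := hex
  have hp0 : (0:ℝ) < ∑ x, r y0 x z0 :=
    lt_of_lt_of_le h0 (Finset.single_le_sum (fun x _ => hnn y0 x z0) (Finset.mem_univ x0))
  have hd0 : (0:ℝ) < ∑ z', ∑ x, r y0 x z' :=
    lt_of_lt_of_le hp0 (Finset.single_le_sum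
      (fun z' _ => Finset.sum_nonneg fun x _ => hnn y0 x z') (Finset.mem_univ z0))
  have hsupnn : ∀ z, (0:ℝ) ≤
      Finset.univ.sup' Finset.univ_nonempty fun y =>
        (∑ x, r y x z) / ∑ z', ∑ x, r y x z' := by
    intro z
    refine le_trans ?_ (Finset.le_sup' _ (Finset.mem_univ y0))
    exact div_nonneg (Finset.sum_nonneg fun x _ => hnn y0 x z) hd0.le
  have hApos : (0:ℝ) < ∑ z, Finset.univ.sup' Finset.univ_nonempty fun y =>
      (∑ x, r y x z) / ∑ z', ∑ x, r y x z' := by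
    have hterm0 : (0:ℝ) < Finset.univ.sup' Finset.univ_nonempty fun y =>
        (∑ x, r y x z0) / ∑ z', ∑ x, r y x z' :=
      lt_of_lt_of_le (div_pos hp0 hd0)
        (Finset.le_sup' (fun y => (∑ x, r y x z0) / ∑ z', ∑ x, r y x z')
          (Finset.mem_univ y0))
    exact lt_of_lt_of_le hterm0
      (Finset.single_le_sum (fun z _ => hsupnn z) (Finset.mem_univ z0))
  unfold maxLeak
  simp only
  apply Real.logb_le_logb_of_le one_lt_two hApos
  refine Finset.sum_le_sum fun z _ => ?_
  exact Finset.sup'_le _ _ fun y _ => key y z
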